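/- Let G be a one-sided POSG, Γ a nonempty convex set of linear functions on Δ(S) such that V(b) = sup_{α ∈ Γ} α(b) is finite for every b ∈ Δ(S), and b ∈ Δ(S). Then sup_{π1 ∈ Π1} inf_{π2 ∈ Π2} u^{V,b}(π1, π2) = inf_{π2 ∈ Π2} sup_{π1 ∈ Π1} u^{V,b}(π1, π2); moreover the outer supremum in the first expression and the outer infimum in the second expression are attained. -/

import Mathlib

open scoped BigOperators

noncomputable section

/-- ℓ1 distance on `S → ℝ`. -/
def l1dist {S : Type*} [Fintype S] (p q : S → ℝ) : ℝ := ∑ s, |p s - q s|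

/-- Evaluation at a belief `b` of the linear function on the simplex with vertex values
`α : S → ℝ`. -/
def lineval {S : Type*} [Fintype S] (α : S → ℝ) (b : S → ℝ) : ℝ := ∑ s, b s * α s

/-- `f` is `k`-Lipschitz with respect to the ℓ1 metric on the probability simplex. -/
def LipOnSimplex {S : Type*} [Fintype S] (k : ℝ) (f : (S → ℝ) → ℝ) : Prop :=
  ∀ p ∈ stdSimplex ℝ S, ∀ q ∈ stdSimplex ℝ S, |f p - f q| ≤ k * l1dist p q

/-- A one-sided partially observable stochastic game. -/
structure OSPOSG (S A1 A2 O : Type*) [Fintype S] [Fintype A1] [Fintype A2] [Fintype O] where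
  /-- transition function: `T s a1 a2 o s'` is the probability of observing `o` and moving
  to `s'` from `s` under actions `a1, a2`. -/
  T : S → A1 → A2 → O → S → ℝ
  T_nonneg : ∀ s a1 a2 o s', 0 ≤ T s a1 a2 o s'
  T_sum : ∀ s a1 a2, ∑ o, ∑ s', T s a1 a2 o s' = 1
  /-- reward function of player 1 -/
  R : S → A1 → A2 → ℝ
  /-- discount factor -/
  γ : ℝ
  γ_pos : 0 < γ
  γ_lt_one : γ < 1

namespace OSPOSG

variable {S A1 A2 O : Type*} [Fintype S] [Fintype A1] [Fintype A2] [Fintype O]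
  [Nonempty S] [Nonempty A1] [Nonempty A2] [Nonempty O]

/-- The minimum reward `r_min`. -/
def rmin (G : OSPOSG S A1 A2 O) : ℝ :=
  Finset.univ.inf' Finset.univ_nonempty fun x : S × A1 × A2 => G.R x.1 x.2.1 x.2.2

/-- The maximum reward `r_max`. -/
def rmax (G : OSPOSG S A1 A2 O) : ℝ :=
  Finset.univ.sup' Finset.univ_nonempty fun x : S × A1 × A2 => G.R x.1 x.2.1 x.2.2

/-- `L = r_min / (1 - γ)`. -/
def Lval (G : OSPOSG S A1 A2 O) : ℝ := G.rmin / (1 - G.γ)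

/-- `U = r_max / (1 - γ)`. -/
def Uval (G : OSPOSG S A1 A2 O) : ℝ := G.rmax / (1 - G.γ)

/-- `δ = (U - L) / 2`. -/
def δval (G : OSPOSG S A1 A2 O) : ℝ := (G.Uval - G.Lval) / 2

/-- The set of stage strategies of player 2. -/
def Pi2 (S A2 : Type*) [Fintype A2] : Set (S → A2 → ℝ) :=
  {π2 | ∀ s, π2 s ∈ stdSimplex ℝ A2}

/-- Vertex values of the value composition `valcomp(π1, ᾱ)`. -/
def valcompVert (G : OSPOSG S A1 A2 O) (π1 : A1 → ℝ) (αb : A1 → O → S → ℝ) (s : S) : ℝ :=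
  Finset.univ.inf' Finset.univ_nonempty fun a2 =>
    ∑ a1, π1 a1 * (G.R s a1 a2 + G.γ * ∑ o, ∑ s', G.T s a1 a2 o s' * αb a1 o s')

/-- The value composition `valcomp(π1, ᾱ)`, a linear function of the belief `b`. -/
def valcomp (G : OSPOSG S A1 A2 O) (π1 : A1 → ℝ) (αb : A1 → O → S → ℝ) (b : S → ℝ) : ℝ :=
  ∑ s, b s * G.valcompVert π1 αb s

/-- `Pr_{b,π1,π2}[a1, o]`: the probability that player 1 plays `a1` and observes `o`. -/
def Pr (G : OSPOSG S A1 A2 O) (b : S → ℝ) (π1 : A1 → ℝ) (π2 : S → A2 → ℝ)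
    (a1 : A1) (o : O) : ℝ :=
  ∑ s, ∑ a2, ∑ s', b s * π1 a1 * π2 s a2 * G.T s a1 a2 o s'

/-- The updated belief `τ(b, a1, π2, o)` of player 1 (junk value `0` if the normalizing
constant vanishes; such terms are always multiplied by a zero probability below). -/
def beliefUpd (G : OSPOSG S A1 A2 O) (b : S → ℝ) (a1 : A1) (π2 : S → A2 → ℝ) (o : O) :
    S → ℝ := fun s' =>
  (∑ s, ∑ a2, b s * π2 s a2 * G.T s a1 a2 o s') /
    (∑ s'', ∑ s, ∑ a2, b s * π2 s a2 * G.T s a1 a2 o s'')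

/-- The stage utility `u^{V,b}(π1, π2)`. -/
def stageU (G : OSPOSG S A1 A2 O) (V : (S → ℝ) → ℝ) (b : S → ℝ)
    (π1 : A1 → ℝ) (π2 : S → A2 → ℝ) : ℝ :=
  (∑ s, ∑ a1, ∑ a2, b s * π1 a1 * π2 s a2 * G.R s a1 a2) +
    G.γ * ∑ a1, ∑ o, G.Pr b π1 π2 a1 o * V (G.beliefUpd b a1 π2 o)

/-- The minimax (Bellman) operator `[HV](b) = sup_{π1} inf_{π2} u^{V,b}(π1,π2)`. -/
def Hop (G : OSPOSG S A1 A2 O) (V : (S → ℝ) → ℝ) (b : S → ℝ) : ℝ :=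
  ⨆ π1 : stdSimplex ℝ A1, ⨅ π2 : Pi2 S A2, G.stageU V b π1.1 π2.1

end OSPOSG

section Abstract
open Set Filter Topology
variable {E : Type*} [TopologicalSpace E]

theorem lscOn_congr {f g : E → ℝ} {s : Set E} (h : LowerSemicontinuousOn f s)
    (he : ∀ x ∈ s, f x = g x) : LowerSemicontinuousOn g s := by
  intro x hx y hy
  have h1 := h x hx y (by show f x > y; rw [he x hx]; exact hy)
  filter_upwards [h1, self_mem_nhdsWithin] with z h1 h2
  rwa [← he z h2]

theorem exists_min_lsc {K : Set E} (hK : IsCompact K) (hne : K.Nonempty) {f : E → ℝ}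
    (hf : LowerSemicontinuousOn f K) (hbdd : BddBelow (f '' K)) :
    ∃ x ∈ K, ∀ y ∈ K, f x ≤ f y := by
  set m := sInf (f '' K) with hm
  have hCn : ∀ n : ℕ, ∃ x, x ∈ K ∧ f x ≤ m + 1 / (n + 1) := by
    intro n
    have hlt : m < m + 1 / (n + 1) := by
      have : (0:ℝ) < 1 / (n+1) := by positivity
      linarith
    obtain ⟨z, hz, hzlt⟩ := exists_lt_of_csInf_lt (hne.image f) hlt
    obtain ⟨x, hx, rfl⟩ := hz
    exact ⟨x, hx, hzlt.le⟩
  set C : ℕ → Set E := fun n => {x ∈ K | f x ≤ m + 1 / (n + 1)} with hC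
  have hCne : ∀ n, (C n).Nonempty := fun n => hCn n
  have hCanti : Antitone C := by
    intro n n' hnn' x hx
    refine ⟨hx.1, hx.2.trans ?_⟩
    have : (1:ℝ) / (n' + 1) ≤ 1 / (n + 1) := by
      apply one_div_le_one_div_of_le (by positivity)
      exact_mod_cast by omega
    linarith
  set F : Filter E := ⨅ n, 𝓟 (C n) with hF
  have hFne : F.NeBot := by
    apply iInf_neBot_of_directed'
    · intro n n'
      exact ⟨max n n', principal_mono.2 (hCanti (le_max_left _ _)),
        principal_mono.2 (hCanti (le_max_right _ _))⟩
    · exact fun n => principal_neBot_iff.2 (hCne n)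
  have hFK : F ≤ 𝓟 K := (iInf_le _ 0).trans (principal_mono.2 fun x hx => hx.1)
  obtain ⟨x, hxK, hcl⟩ := hK hFK
  refine ⟨x, hxK, fun y hy => ?_⟩
  have hxm : f x ≤ m := by
    by_contra hcon
    push_neg at hcon
    obtain ⟨n, hn⟩ := exists_nat_one_div_lt (sub_pos.2 hcon)
    have hy' : m + 1 / (n + 1) < f x := by linarith
    have hev := hf x hxK (m + 1 / (n + 1)) hy'
    haveI : (𝓝 x ⊓ F).NeBot := hcl
    have hle : 𝓝 x ⊓ F ≤ 𝓝[K] x := by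
      rw [nhdsWithin]
      exact inf_le_inf_left _ hFK
    have h1 : {z | m + 1 / (n + 1) < f z} ∈ 𝓝 x ⊓ F := hle hev
    have h2 : C n ∈ 𝓝 x ⊓ F := mem_inf_of_right (mem_iInf_of_mem n (mem_principal_self _))
    obtain ⟨z, hz1, hz2⟩ := Filter.nonempty_of_mem (inter_mem h1 h2)
    exact absurd hz2.2 (not_le.2 hz1)
  exact hxm.trans (csInf_le hbdd ⟨y, hy, rfl⟩)


end Abstract

section Sep
open Set Filter Topology

theorem core_sep {ι E : Type*} [Fintype ι] [Nonempty ι] [DecidableEq ι]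
    [AddCommGroup E] [Module ℝ E] [TopologicalSpace E]
    {K : Set E} (hKconv : Convex ℝ K) (hKne : K.Nonempty) (g : ι → E → ℝ)
    (hconv : ∀ i, ∀ y ∈ K, ∀ y' ∈ K, ∀ a b : ℝ, 0 ≤ a → 0 ≤ b → a + b = 1 →
      g i (a • y + b • y') ≤ a * g i y + b * g i y')
    (v : ℝ) (hv : ∀ y ∈ K, ∃ i, v ≤ g i y) :
    ∃ p ∈ stdSimplex ℝ ι, ∀ y ∈ K, v ≤ ∑ i, p i * g i y := by
  classical
  set D : Set (ι → ℝ) := {z | ∀ i, z i < v} with hD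
  set C : Set (ι → ℝ) := {z | ∃ y ∈ K, ∀ i, g i y ≤ z i} with hC
  have hDconv : Convex ℝ D := by
    have : D = Set.univ.pi (fun _ : ι => Iio v) := by
      ext z; simp [hD, Set.mem_pi]
    rw [this]
    exact convex_pi fun i _ => convex_Iio v
  have hDopen : IsOpen D := by
    have : D = Set.univ.pi (fun _ : ι => Iio v) := by
      ext z; simp [hD, Set.mem_pi]
    rw [this]
    exact isOpen_set_pi finite_univ fun i _ => isOpen_Iio
  have hCconv : Convex ℝ C := by
    rintro z ⟨y, hy, hz⟩ z' ⟨y', hy', hz'⟩ a b ha hb hab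
    refine ⟨a • y + b • y', hKconv hy hy' ha hb hab, fun i => ?_⟩
    have h1 := hconv i y hy y' hy' a b ha hb hab
    calc g i (a • y + b • y') ≤ a * g i y + b * g i y' := h1
      _ ≤ a * z i + b * z' i := by
          have := mul_le_mul_of_nonneg_left (hz i) ha
          have := mul_le_mul_of_nonneg_left (hz' i) hb
          linarith [mul_le_mul_of_nonneg_left (hz i) ha,
            mul_le_mul_of_nonneg_left (hz' i) hb]
      _ = (a • z + b • z') i := by simp [smul_eq_mul]
  have hdisj : Disjoint D C := by
    rw [Set.disjoint_left]
    rintro z hzD ⟨y, hy, hz⟩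
    obtain ⟨i, hi⟩ := hv y hy
    exact absurd (hi.trans (hz i)) (not_le.2 (hzD i))
  obtain ⟨f, c, hfD, hfC⟩ := geometric_hahn_banach_open hDconv hDopen hCconv hdisj
  set p' : ι → ℝ := fun i => f (Pi.single i 1) with hp'
  have hfz : ∀ z : ι → ℝ, f z = ∑ i, z i * p' i := by
    intro z
    conv_lhs => rw [← Finset.univ_sum_single z]
    rw [map_sum]
    refine Finset.sum_congr rfl fun i _ => ?_
    have hsingle : (Pi.single i (z i) : ι → ℝ) = z i • (Pi.single i (1:ℝ) : ι → ℝ) := by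
      ext j
      by_cases h : j = i <;> simp [Pi.single_apply, h]
    rw [hsingle, map_smul, smul_eq_mul]
  obtain ⟨y0, hy0⟩ := hKne
  have hz0C : (fun i => g i y0) ∈ C := ⟨y0, hy0, fun i => le_rfl⟩
  set z0 : ι → ℝ := fun i => g i y0 with hz0
  -- p' is nonnegative
  have hp'nn : ∀ i, 0 ≤ p' i := by
    intro i
    by_contra hneg
    push_neg at hneg
    set t : ℝ := max 0 ((c - f z0) / p' i + 1) with ht
    have ht0 : 0 ≤ t := le_max_left _ _
    set e : ι → ℝ := Pi.single i 1 with he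
    have htC : z0 + t • e ∈ C := by
      refine ⟨y0, hy0, fun j => ?_⟩
      have hnn : 0 ≤ t * e j := by
        apply mul_nonneg ht0
        by_cases h : j = i <;> simp [he, Pi.single_apply, h]
      have : (z0 + t • e) j = z0 j + t * e j := by simp [smul_eq_mul]
      rw [this]
      have : g j y0 = z0 j := rfl
      rw [this]
      linarith
    have hft : f (z0 + t • e) = f z0 + t * p' i := by
      rw [map_add, map_smul, smul_eq_mul, he, hp']
    have hge := hfC _ htC
    rw [hft] at hge
    -- t > (c - f z0)/p' i, p' i < 0 so t * p' i < c - f z0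
    have hlt : t * p' i < c - f z0 := by
      have h1 : (c - f z0) / p' i < t := lt_of_lt_of_le (lt_add_one _) (le_max_right _ _)
      calc t * p' i < ((c - f z0) / p' i) * p' i := by
            exact mul_lt_mul_of_neg_right h1 hneg
        _ = c - f z0 := div_mul_cancel₀ _ (ne_of_lt hneg)
    linarith
  set σ : ℝ := ∑ i, p' i with hσ
  have hσpos : 0 < σ := by
    rcases lt_or_eq_of_le (Finset.sum_nonneg fun i _ => hp'nn i) with h | h
    · exact h
    · exfalso
      have hall : ∀ i, p' i = 0 := by
        intro i
        have := (Finset.sum_eq_zero_iff_of_nonneg fun j _ => hp'nn j).1 h.symm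
        exact this i (Finset.mem_univ i)
      have h1 : f (fun _ => v - 1) < c := hfD _ (fun i => by simp)
      have h2 : c ≤ f z0 := hfC _ hz0C
      rw [hfz] at h1 h2
      simp [hall] at h1 h2
      linarith
  have hvc : v * σ ≤ c := by
    by_contra hcon
    push_neg at hcon
    set ε : ℝ := (v * σ - c) / (2 * σ) with hε
    have hεpos : 0 < ε := div_pos (by linarith) (by positivity)
    have hmem : (fun _ : ι => v - ε) ∈ D := by
      intro i
      show v - ε < v
      linarith
    have := hfD _ hmem
    rw [hfz] at this
    have heq : ∑ i, (v - ε) * p' i = (v - ε) * σ := by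
      rw [← Finset.mul_sum]
    rw [heq] at this
    have : v * σ - ε * σ < c := by nlinarith
    have hεσ : ε * σ = (v * σ - c) / 2 := by
      rw [hε, div_mul_eq_mul_div, div_eq_div_iff (by positivity) (by norm_num)]
      ring
    linarith
  refine ⟨fun i => p' i / σ, ⟨fun i => div_nonneg (hp'nn i) hσpos.le, ?_⟩, ?_⟩
  · rw [← Finset.sum_div, div_self (ne_of_gt hσpos)]
  · intro y hy
    have hyC : (fun i => g i y) ∈ C := ⟨y, hy, fun i => le_rfl⟩
    have h1 : c ≤ ∑ i, g i y * p' i := by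
      have := hfC _ hyC
      rwa [hfz] at this
    have h2 : ∑ i, p' i / σ * g i y = (∑ i, g i y * p' i) / σ := by
      rw [Finset.sum_div]
      congr 1; ext i; ring
    rw [h2]
    rw [le_div_iff₀ hσpos]
    calc v * σ ≤ c := hvc
      _ ≤ _ := h1

end Sep

section ConcreteAux

set_option linter.unusedSectionVars false
open Pointwise

variable {S A1 A2 O : Type*} [Fintype S] [Fintype A1] [Fintype A2] [Fintype O]
  [Nonempty S] [Nonempty A1] [Nonempty A2] [Nonempty O] [DecidableEq S]

/-- numerator of the belief update, as a function of `π2`. -/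
def nm (G : OSPOSG S A1 A2 O) (b : S → ℝ) (a1 : A1) (o : O) (π2 : S → A2 → ℝ) (s' : S) : ℝ :=
  ∑ s, ∑ a2, b s * π2 s a2 * G.T s a1 a2 o s'

/-- denominator of the belief update. -/
def dn (G : OSPOSG S A1 A2 O) (b : S → ℝ) (a1 : A1) (o : O) (π2 : S → A2 → ℝ) : ℝ :=
  ∑ s', nm G b a1 o π2 s'

theorem dn_def (G : OSPOSG S A1 A2 O) (b : S → ℝ) (a1 : A1) (o : O) (π2 : S → A2 → ℝ) :
    dn G b a1 o π2 = ∑ s', nm G b a1 o π2 s' := rfl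

def FF (G : OSPOSG S A1 A2 O) (V : (S → ℝ) → ℝ) (b : S → ℝ) (a1 : A1) (o : O)
    (π2 : S → A2 → ℝ) : ℝ :=
  dn G b a1 o π2 * V (G.beliefUpd b a1 π2 o)

def gg (G : OSPOSG S A1 A2 O) (V : (S → ℝ) → ℝ) (b : S → ℝ) (a1 : A1)
    (π2 : S → A2 → ℝ) : ℝ :=
  (∑ s, ∑ a2, b s * π2 s a2 * G.R s a1 a2) + G.γ * ∑ o, FF G V b a1 o π2

def ph (G : OSPOSG S A1 A2 O) (b : S → ℝ) (a1 : A1) (o : O) (α : S → ℝ)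
    (π2 : S → A2 → ℝ) : ℝ :=
  ∑ s', nm G b a1 o π2 s' * α s'

/-- the vertex of the simplex at `i`. -/
def vtx {ι : Type*} [DecidableEq ι] (i : ι) : ι → ℝ := fun t => if t = i then 1 else 0

theorem vtx_mem {ι : Type*} [Fintype ι] [DecidableEq ι] (i : ι) : vtx i ∈ stdSimplex ℝ ι := by
  constructor
  · intro t
    unfold vtx
    split <;> norm_num
  · show ∑ t, vtx i t = 1
    unfold vtx
    rw [Finset.sum_ite_eq']
    simp

def Mv (V : (S → ℝ) → ℝ) : ℝ :=
  Finset.univ.sup' Finset.univ_nonempty fun s : S => V (vtx s)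

theorem lineval_vtx (α : S → ℝ) (s : S) : lineval α (vtx s) = α s := by
  unfold lineval vtx
  simp only [ite_mul, one_mul, zero_mul]
  rw [Finset.sum_ite_eq']
  simp

variable (G : OSPOSG S A1 A2 O) (V : (S → ℝ) → ℝ) (b : S → ℝ)

theorem nm_nonneg (hb : b ∈ stdSimplex ℝ S) {π2 : S → A2 → ℝ} (hπ2 : π2 ∈ OSPOSG.Pi2 S A2)
    (a1 : A1) (o : O) (s' : S) : 0 ≤ nm G b a1 o π2 s' := by
  refine Finset.sum_nonneg fun s _ => Finset.sum_nonneg fun a2 _ => ?_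
  exact mul_nonneg (mul_nonneg (hb.1 s) ((hπ2 s).1 a2)) (G.T_nonneg s a1 a2 o s')

theorem dn_nonneg (hb : b ∈ stdSimplex ℝ S) {π2 : S → A2 → ℝ} (hπ2 : π2 ∈ OSPOSG.Pi2 S A2)
    (a1 : A1) (o : O) : 0 ≤ dn G b a1 o π2 :=
  Finset.sum_nonneg fun s' _ => nm_nonneg G b hb hπ2 a1 o s'

theorem Pr_eq (π1 : A1 → ℝ) (π2 : S → A2 → ℝ) (a1 : A1) (o : O) :
    G.Pr b π1 π2 a1 o = π1 a1 * dn G b a1 o π2 := by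
  unfold OSPOSG.Pr dn nm
  simp only [Finset.mul_sum]
  conv_rhs => rw [Finset.sum_comm]
  refine Finset.sum_congr rfl fun s _ => ?_
  rw [Finset.sum_comm]
  exact Finset.sum_congr rfl fun s' _ => Finset.sum_congr rfl fun a2 _ => by ring

theorem beliefUpd_eq (a1 : A1) (π2 : S → A2 → ℝ) (o : O) :
    G.beliefUpd b a1 π2 o = fun s' => nm G b a1 o π2 s' / dn G b a1 o π2 := rfl

theorem upd_mem (hb : b ∈ stdSimplex ℝ S) {π2 : S → A2 → ℝ} (hπ2 : π2 ∈ OSPOSG.Pi2 S A2)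
    {a1 : A1} {o : O} (hd : 0 < dn G b a1 o π2) :
    G.beliefUpd b a1 π2 o ∈ stdSimplex ℝ S := by
  rw [beliefUpd_eq]
  refine ⟨fun s' => div_nonneg (nm_nonneg G b hb hπ2 a1 o s') hd.le, ?_⟩
  show ∑ s', nm G b a1 o π2 s' / dn G b a1 o π2 = 1
  rw [← Finset.sum_div, ← dn_def, div_self (ne_of_gt hd)]

theorem sum_dn (hb : b ∈ stdSimplex ℝ S) {π2 : S → A2 → ℝ} (hπ2 : π2 ∈ OSPOSG.Pi2 S A2)
    (a1 : A1) : ∑ o, dn G b a1 o π2 = 1 := by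
  unfold dn nm
  have h1 : ∀ o : O, ∑ s', ∑ s, ∑ a2, b s * π2 s a2 * G.T s a1 a2 o s'
      = ∑ s, ∑ a2, ∑ s', b s * π2 s a2 * G.T s a1 a2 o s' := by
    intro o
    rw [Finset.sum_comm]
    exact Finset.sum_congr rfl fun s _ => Finset.sum_comm
  simp only [h1]
  rw [Finset.sum_comm]
  have h2 : ∀ s : S, ∑ o, ∑ a2, ∑ s', b s * π2 s a2 * G.T s a1 a2 o s' = b s := by
    intro s
    rw [Finset.sum_comm]
    have h3 : ∀ a2 : A2, ∑ o, ∑ s', b s * π2 s a2 * G.T s a1 a2 o s'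
        = b s * π2 s a2 := by
      intro a2
      have : ∑ o, ∑ s', b s * π2 s a2 * G.T s a1 a2 o s'
          = b s * π2 s a2 * ∑ o, ∑ s', G.T s a1 a2 o s' := by
        rw [Finset.mul_sum]
        exact Finset.sum_congr rfl fun o _ => by rw [Finset.mul_sum]
      rw [this, G.T_sum, mul_one]
    simp only [h3]
    rw [← Finset.mul_sum, (hπ2 s).2, mul_one]
  simp only [h2]
  exact hb.2

theorem sum_bπ2 (hb : b ∈ stdSimplex ℝ S) {π2 : S → A2 → ℝ} (hπ2 : π2 ∈ OSPOSG.Pi2 S A2) :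
    ∑ s, ∑ a2, b s * π2 s a2 = 1 := by
  have : ∀ s : S, ∑ a2, b s * π2 s a2 = b s := by
    intro s
    rw [← Finset.mul_sum, (hπ2 s).2, mul_one]
  simp only [this]
  exact hb.2

theorem stageU_decomp (π1 : A1 → ℝ) (π2 : S → A2 → ℝ) :
    G.stageU V b π1 π2 = ∑ a1, π1 a1 * gg G V b a1 π2 := by
  unfold OSPOSG.stageU gg
  simp only [mul_add, Finset.sum_add_distrib]
  congr 1
  · rw [Finset.sum_comm]
    refine Finset.sum_congr rfl fun a1 _ => ?_
    rw [Finset.mul_sum]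
    refine Finset.sum_congr rfl fun s _ => ?_
    rw [Finset.mul_sum]
    exact Finset.sum_congr rfl fun a2 _ => by ring
  · rw [Finset.mul_sum]
    refine Finset.sum_congr rfl fun a1 _ => ?_
    rw [Finset.mul_sum, Finset.mul_sum, Finset.mul_sum]
    refine Finset.sum_congr rfl fun o _ => ?_
    rw [Pr_eq]
    unfold FF
    ring

theorem nm_affine (a1 : A1) (o : O) (s' : S) (y y' : S → A2 → ℝ) (c d : ℝ) :
    nm G b a1 o (c • y + d • y') s' = c * nm G b a1 o y s' + d * nm G b a1 o y' s' := by
  unfold nm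
  rw [Finset.mul_sum, Finset.mul_sum, ← Finset.sum_add_distrib]
  refine Finset.sum_congr rfl fun s _ => ?_
  rw [Finset.mul_sum, Finset.mul_sum, ← Finset.sum_add_distrib]
  refine Finset.sum_congr rfl fun a2 _ => ?_
  have : (c • y + d • y') s a2 = c * y s a2 + d * y' s a2 := by
    simp [smul_eq_mul]
  rw [this]
  ring

theorem ph_affine (a1 : A1) (o : O) (α : S → ℝ) (y y' : S → A2 → ℝ) (c d : ℝ) :
    ph G b a1 o α (c • y + d • y') = c * ph G b a1 o α y + d * ph G b a1 o α y' := by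
  unfold ph
  rw [Finset.mul_sum, Finset.mul_sum, ← Finset.sum_add_distrib]
  refine Finset.sum_congr rfl fun s' _ => ?_
  rw [nm_affine]
  ring

theorem Pi2_eq_pi : OSPOSG.Pi2 S A2 = Set.univ.pi fun _ : S => stdSimplex ℝ A2 := by
  ext π2
  simp [OSPOSG.Pi2, Set.mem_pi]

theorem Pi2_convex : Convex ℝ (OSPOSG.Pi2 S A2) := by
  rw [Pi2_eq_pi]
  exact convex_pi fun _ _ => convex_stdSimplex ℝ A2

theorem Pi2_compact : IsCompact (OSPOSG.Pi2 S A2) := by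
  rw [Pi2_eq_pi]
  exact isCompact_univ_pi fun _ => isCompact_stdSimplex ℝ A2

theorem Pi2_nonempty : (OSPOSG.Pi2 S A2).Nonempty := by
  classical
  exact ⟨fun _ => vtx (Classical.arbitrary A2), fun s => vtx_mem _⟩

theorem alpha_le_Mv (Γ : Set (S → ℝ))
    (hbdd : ∀ b' ∈ stdSimplex ℝ S, BddAbove ((fun α => lineval α b') '' Γ))
    (hV : ∀ b' ∈ stdSimplex ℝ S, V b' = sSup ((fun α => lineval α b') '' Γ))
    {α : S → ℝ} (hα : α ∈ Γ) (s : S) : α s ≤ Mv V := by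
  have h1 : lineval α (vtx s) ≤ V (vtx s) := by
    rw [hV _ (vtx_mem s)]
    exact le_csSup (hbdd _ (vtx_mem s)) ⟨α, hα, rfl⟩
  rw [lineval_vtx] at h1
  refine h1.trans ?_
  unfold Mv
  exact Finset.le_sup' (fun s : S => V (vtx s)) (Finset.mem_univ s)

theorem V_le_Mv (Γ : Set (S → ℝ)) (hne : Γ.Nonempty)
    (hbdd : ∀ b' ∈ stdSimplex ℝ S, BddAbove ((fun α => lineval α b') '' Γ))
    (hV : ∀ b' ∈ stdSimplex ℝ S, V b' = sSup ((fun α => lineval α b') '' Γ))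
    {b' : S → ℝ} (hb' : b' ∈ stdSimplex ℝ S) : V b' ≤ Mv V := by
  rw [hV _ hb']
  refine csSup_le (hne.image _) ?_
  rintro x ⟨α, hα, rfl⟩
  show ∑ s, b' s * α s ≤ Mv V
  calc ∑ s, b' s * α s ≤ ∑ s, b' s * Mv V :=
        Finset.sum_le_sum fun s _ =>
          mul_le_mul_of_nonneg_left (alpha_le_Mv V Γ hbdd hV hα s) (hb'.1 s)
    _ = Mv V := by rw [← Finset.sum_mul, hb'.2, one_mul]

theorem inf_le_V (Γ : Set (S → ℝ))
    (hbdd : ∀ b' ∈ stdSimplex ℝ S, BddAbove ((fun α => lineval α b') '' Γ))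
    (hV : ∀ b' ∈ stdSimplex ℝ S, V b' = sSup ((fun α => lineval α b') '' Γ))
    {α0 : S → ℝ} (hα0 : α0 ∈ Γ) {b' : S → ℝ} (hb' : b' ∈ stdSimplex ℝ S) :
    Finset.univ.inf' Finset.univ_nonempty α0 ≤ V b' := by
  have h2 : lineval α0 b' ≤ V b' := by
    rw [hV _ hb']
    exact le_csSup (hbdd _ hb') ⟨α0, hα0, rfl⟩
  refine le_trans ?_ h2
  show Finset.univ.inf' Finset.univ_nonempty α0 ≤ ∑ s, b' s * α0 s
  calc Finset.univ.inf' Finset.univ_nonempty α0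
      = ∑ s, b' s * Finset.univ.inf' Finset.univ_nonempty α0 := by
        rw [← Finset.sum_mul, hb'.2, one_mul]
    _ ≤ ∑ s, b' s * α0 s :=
        Finset.sum_le_sum fun s _ =>
          mul_le_mul_of_nonneg_left (Finset.inf'_le _ (Finset.mem_univ s)) (hb'.1 s)

theorem ph_le (Γ : Set (S → ℝ))
    (hbdd : ∀ b' ∈ stdSimplex ℝ S, BddAbove ((fun α => lineval α b') '' Γ))
    (hV : ∀ b' ∈ stdSimplex ℝ S, V b' = sSup ((fun α => lineval α b') '' Γ))
    (hb : b ∈ stdSimplex ℝ S) {π2 : S → A2 → ℝ} (hπ2 : π2 ∈ OSPOSG.Pi2 S A2)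
    {α : S → ℝ} (hα : α ∈ Γ) (a1 : A1) (o : O) :
    ph G b a1 o α π2 ≤ dn G b a1 o π2 * Mv V := by
  unfold ph
  rw [dn_def, Finset.sum_mul]
  exact Finset.sum_le_sum fun s' _ =>
    mul_le_mul_of_nonneg_left (alpha_le_Mv V Γ hbdd hV hα s') (nm_nonneg G b hb hπ2 a1 o s')

theorem ph_bddAbove (Γ : Set (S → ℝ))
    (hbdd : ∀ b' ∈ stdSimplex ℝ S, BddAbove ((fun α => lineval α b') '' Γ))
    (hV : ∀ b' ∈ stdSimplex ℝ S, V b' = sSup ((fun α => lineval α b') '' Γ))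
    (hb : b ∈ stdSimplex ℝ S) {π2 : S → A2 → ℝ} (hπ2 : π2 ∈ OSPOSG.Pi2 S A2)
    (a1 : A1) (o : O) : BddAbove ((fun α => ph G b a1 o α π2) '' Γ) := by
  refine ⟨dn G b a1 o π2 * Mv V, ?_⟩
  rintro x ⟨α, hα, rfl⟩
  exact ph_le G V b Γ hbdd hV hb hπ2 hα a1 o

theorem FF_eq (Γ : Set (S → ℝ)) (hne : Γ.Nonempty)
    (hbdd : ∀ b' ∈ stdSimplex ℝ S, BddAbove ((fun α => lineval α b') '' Γ))
    (hV : ∀ b' ∈ stdSimplex ℝ S, V b' = sSup ((fun α => lineval α b') '' Γ))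
    (hb : b ∈ stdSimplex ℝ S) {π2 : S → A2 → ℝ} (hπ2 : π2 ∈ OSPOSG.Pi2 S A2)
    (a1 : A1) (o : O) :
    FF G V b a1 o π2 = sSup ((fun α => ph G b a1 o α π2) '' Γ) := by
  rcases eq_or_lt_of_le (dn_nonneg G b hb hπ2 a1 o) with hd | hd
  · have hnm : ∀ s', nm G b a1 o π2 s' = 0 := by
      intro s'
      have h0 := (Finset.sum_eq_zero_iff_of_nonneg
        (fun t (_ : t ∈ Finset.univ) => nm_nonneg G b hb hπ2 a1 o t)).1 hd.symm
      exact h0 s' (Finset.mem_univ s')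
    have hph : ∀ α : S → ℝ, ph G b a1 o α π2 = 0 := by
      intro α
      unfold ph
      simp [hnm]
    have himg : (fun α => ph G b a1 o α π2) '' Γ = {0} := by
      apply Set.eq_singleton_iff_nonempty_unique_mem.2
      refine ⟨hne.image _, ?_⟩
      rintro x ⟨α, hα, rfl⟩
      exact hph α
    rw [himg, csSup_singleton]
    unfold FF
    rw [← hd, zero_mul]
  · have hmem := upd_mem G b hb hπ2 hd
    have hphα : ∀ α : S → ℝ,
        ph G b a1 o α π2 = dn G b a1 o π2 * lineval α (G.beliefUpd b a1 π2 o) := by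
      intro α
      unfold ph lineval
      rw [Finset.mul_sum]
      refine Finset.sum_congr rfl fun s' _ => ?_
      rw [beliefUpd_eq]
      show nm G b a1 o π2 s' * α s'
          = dn G b a1 o π2 * (nm G b a1 o π2 s' / dn G b a1 o π2 * α s')
      field_simp
    have himg : (fun α => ph G b a1 o α π2) '' Γ
        = dn G b a1 o π2 • ((fun α => lineval α (G.beliefUpd b a1 π2 o)) '' Γ) := by
      rw [← Set.image_smul, Set.image_image]
      exact Set.image_congr fun α _ => by rw [hphα α, smul_eq_mul]
    rw [himg, Real.sSup_smul_of_nonneg hd.le, smul_eq_mul, ← hV _ hmem]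
    rfl

theorem gg_convex_ineq (Γ : Set (S → ℝ)) (hne : Γ.Nonempty)
    (hbdd : ∀ b' ∈ stdSimplex ℝ S, BddAbove ((fun α => lineval α b') '' Γ))
    (hV : ∀ b' ∈ stdSimplex ℝ S, V b' = sSup ((fun α => lineval α b') '' Γ))
    (hb : b ∈ stdSimplex ℝ S) (a1 : A1) :
    ∀ y ∈ OSPOSG.Pi2 S A2, ∀ y' ∈ OSPOSG.Pi2 S A2, ∀ c d : ℝ, 0 ≤ c → 0 ≤ d → c + d = 1 →
      gg G V b a1 (c • y + d • y') ≤ c * gg G V b a1 y + d * gg G V b a1 y' := by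
  intro y hy y' hy' c d hc hd hcd
  have hmix : c • y + d • y' ∈ OSPOSG.Pi2 S A2 := Pi2_convex hy hy' hc hd hcd
  have hrew : (∑ s, ∑ a2, b s * (c • y + d • y') s a2 * G.R s a1 a2)
      = c * (∑ s, ∑ a2, b s * y s a2 * G.R s a1 a2)
        + d * (∑ s, ∑ a2, b s * y' s a2 * G.R s a1 a2) := by
    rw [Finset.mul_sum, Finset.mul_sum, ← Finset.sum_add_distrib]
    refine Finset.sum_congr rfl fun s _ => ?_
    rw [Finset.mul_sum, Finset.mul_sum, ← Finset.sum_add_distrib]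
    refine Finset.sum_congr rfl fun a2 _ => ?_
    have hap : (c • y + d • y') s a2 = c * y s a2 + d * y' s a2 := by simp [smul_eq_mul]
    rw [hap]
    ring
  have hFF : ∀ o : O, FF G V b a1 o (c • y + d • y')
      ≤ c * FF G V b a1 o y + d * FF G V b a1 o y' := by
    intro o
    rw [FF_eq G V b Γ hne hbdd hV hb hmix a1 o]
    refine csSup_le (hne.image _) ?_
    rintro x ⟨α, hα, rfl⟩
    show ph G b a1 o α (c • y + d • y') ≤ _
    rw [ph_affine]
    have h1 : ph G b a1 o α y ≤ FF G V b a1 o y := by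
      rw [FF_eq G V b Γ hne hbdd hV hb hy a1 o]
      exact le_csSup (ph_bddAbove G V b Γ hbdd hV hb hy a1 o) ⟨α, hα, rfl⟩
    have h2 : ph G b a1 o α y' ≤ FF G V b a1 o y' := by
      rw [FF_eq G V b Γ hne hbdd hV hb hy' a1 o]
      exact le_csSup (ph_bddAbove G V b Γ hbdd hV hb hy' a1 o) ⟨α, hα, rfl⟩
    have h3 := mul_le_mul_of_nonneg_left h1 hc
    have h4 := mul_le_mul_of_nonneg_left h2 hd
    linarith
  unfold gg
  rw [hrew]
  have h5 : ∑ o, FF G V b a1 o (c • y + d • y')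
      ≤ c * (∑ o, FF G V b a1 o y) + d * (∑ o, FF G V b a1 o y') := by
    rw [Finset.mul_sum, Finset.mul_sum, ← Finset.sum_add_distrib]
    exact Finset.sum_le_sum fun o _ => hFF o
  have h6 := mul_le_mul_of_nonneg_left h5 G.γ_pos.le
  ring_nf
  nlinarith [h6]

theorem ph_continuous (a1 : A1) (o : O) (α : S → ℝ) :
    Continuous fun π2 : S → A2 → ℝ => ph G b a1 o α π2 := by
  unfold ph nm
  refine continuous_finset_sum _ fun s' _ => Continuous.mul ?_ continuous_const
  refine continuous_finset_sum _ fun s _ => continuous_finset_sum _ fun a2 _ => ?_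
  have hc : Continuous fun π2 : S → A2 → ℝ => π2 s a2 :=
    (continuous_apply a2).comp (continuous_apply s)
  exact (continuous_const.mul hc).mul continuous_const

theorem rew_continuous (a1 : A1) :
    Continuous fun π2 : S → A2 → ℝ => ∑ s, ∑ a2, b s * π2 s a2 * G.R s a1 a2 := by
  refine continuous_finset_sum _ fun s _ => continuous_finset_sum _ fun a2 _ => ?_
  have hc : Continuous fun π2 : S → A2 → ℝ => π2 s a2 :=
    (continuous_apply a2).comp (continuous_apply s)
  exact (continuous_const.mul hc).mul continuous_const

theorem gg_lsc (Γ : Set (S → ℝ)) (hne : Γ.Nonempty)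
    (hbdd : ∀ b' ∈ stdSimplex ℝ S, BddAbove ((fun α => lineval α b') '' Γ))
    (hV : ∀ b' ∈ stdSimplex ℝ S, V b' = sSup ((fun α => lineval α b') '' Γ))
    (hb : b ∈ stdSimplex ℝ S) (a1 : A1) :
    LowerSemicontinuousOn (gg G V b a1) (OSPOSG.Pi2 S A2) := by
  haveI : Nonempty ↥Γ := hne.to_subtype
  have hFFo : ∀ o : O, LowerSemicontinuousOn (FF G V b a1 o) (OSPOSG.Pi2 S A2) := by
    intro o
    have h1 : LowerSemicontinuousOn (fun π2 => ⨆ α : ↥Γ, ph G b a1 o α.1 π2)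
        (OSPOSG.Pi2 S A2) := by
      refine lowerSemicontinuousOn_ciSup (fun x hx => ?_) fun α =>
        (ph_continuous G b a1 o α.1).lowerSemicontinuous.lowerSemicontinuousOn _
      refine ⟨dn G b a1 o x * Mv V, ?_⟩
      rintro t ⟨α, rfl⟩
      exact ph_le G V b Γ hbdd hV hb hx α.2 a1 o
    refine lscOn_congr h1 fun x hx => ?_
    show (⨆ α : ↥Γ, ph G b a1 o α.1 x) = FF G V b a1 o x
    rw [FF_eq G V b Γ hne hbdd hV hb hx a1 o, iSup, Set.image_eq_range]
  have h2 : LowerSemicontinuousOn (fun π2 => ∑ o, FF G V b a1 o π2) (OSPOSG.Pi2 S A2) :=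
    lowerSemicontinuousOn_sum fun o _ => hFFo o
  have h3 : LowerSemicontinuousOn (fun π2 => G.γ * ∑ o, FF G V b a1 o π2)
      (OSPOSG.Pi2 S A2) := by
    have := (continuous_const.mul continuous_id).comp_lowerSemicontinuousOn h2
      (fun x y hxy => by simpa using mul_le_mul_of_nonneg_left hxy G.γ_pos.le)
    exact this
  exact ((rew_continuous G b a1).lowerSemicontinuous.lowerSemicontinuousOn _).add h3

theorem gg_bounds {π2 : S → A2 → ℝ} (hb : b ∈ stdSimplex ℝ S)
    (hπ2 : π2 ∈ OSPOSG.Pi2 S A2) (a1 : A1) (m M : ℝ)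
    (hVlb : ∀ b' ∈ stdSimplex ℝ S, m ≤ V b') (hVub : ∀ b' ∈ stdSimplex ℝ S, V b' ≤ M) :
    G.rmin + G.γ * m ≤ gg G V b a1 π2 ∧ gg G V b a1 π2 ≤ G.rmax + G.γ * M := by
  have hFlb : ∀ o : O, dn G b a1 o π2 * m ≤ FF G V b a1 o π2 := by
    intro o
    rcases eq_or_lt_of_le (dn_nonneg G b hb hπ2 a1 o) with hd | hd
    · unfold FF
      rw [← hd, zero_mul, zero_mul]
    · exact mul_le_mul_of_nonneg_left (hVlb _ (upd_mem G b hb hπ2 hd)) hd.le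
  have hFub : ∀ o : O, FF G V b a1 o π2 ≤ dn G b a1 o π2 * M := by
    intro o
    rcases eq_or_lt_of_le (dn_nonneg G b hb hπ2 a1 o) with hd | hd
    · unfold FF
      rw [← hd, zero_mul, zero_mul]
    · exact mul_le_mul_of_nonneg_left (hVub _ (upd_mem G b hb hπ2 hd)) hd.le
  have hsum_lb : m ≤ ∑ o, FF G V b a1 o π2 := by
    calc m = (∑ o, dn G b a1 o π2) * m := by rw [sum_dn G b hb hπ2 a1, one_mul]
      _ = ∑ o, dn G b a1 o π2 * m := by rw [Finset.sum_mul]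
      _ ≤ ∑ o, FF G V b a1 o π2 := Finset.sum_le_sum fun o _ => hFlb o
  have hsum_ub : ∑ o, FF G V b a1 o π2 ≤ M := by
    calc ∑ o, FF G V b a1 o π2 ≤ ∑ o, dn G b a1 o π2 * M :=
          Finset.sum_le_sum fun o _ => hFub o
      _ = (∑ o, dn G b a1 o π2) * M := by rw [Finset.sum_mul]
      _ = M := by rw [sum_dn G b hb hπ2 a1, one_mul]
  have hrew_lb : G.rmin ≤ ∑ s, ∑ a2, b s * π2 s a2 * G.R s a1 a2 := by
    calc G.rmin = ∑ s, ∑ a2, b s * π2 s a2 * G.rmin := by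
          conv_lhs => rw [← one_mul G.rmin, ← sum_bπ2 b hb hπ2]
          rw [Finset.sum_mul]
          exact Finset.sum_congr rfl fun s _ => by rw [Finset.sum_mul]
      _ ≤ ∑ s, ∑ a2, b s * π2 s a2 * G.R s a1 a2 := by
          refine Finset.sum_le_sum fun s _ => Finset.sum_le_sum fun a2 _ => ?_
          refine mul_le_mul_of_nonneg_left ?_ (mul_nonneg (hb.1 s) ((hπ2 s).1 a2))
          unfold OSPOSG.rmin
          exact Finset.inf'_le _ (Finset.mem_univ (s, a1, a2))
  have hrew_ub : ∑ s, ∑ a2, b s * π2 s a2 * G.R s a1 a2 ≤ G.rmax := by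
    calc ∑ s, ∑ a2, b s * π2 s a2 * G.R s a1 a2
        ≤ ∑ s, ∑ a2, b s * π2 s a2 * G.rmax := by
          refine Finset.sum_le_sum fun s _ => Finset.sum_le_sum fun a2 _ => ?_
          refine mul_le_mul_of_nonneg_left ?_ (mul_nonneg (hb.1 s) ((hπ2 s).1 a2))
          unfold OSPOSG.rmax
          exact Finset.le_sup' (fun x : S × A1 × A2 => G.R x.1 x.2.1 x.2.2)
            (Finset.mem_univ (s, a1, a2))
      _ = G.rmax := by
          conv_rhs => rw [← one_mul G.rmax, ← sum_bπ2 b hb hπ2]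
          rw [Finset.sum_mul]
          exact Finset.sum_congr rfl fun s _ => by rw [Finset.sum_mul]
  unfold gg
  constructor
  · have := mul_le_mul_of_nonneg_left hsum_lb G.γ_pos.le
    linarith
  · have := mul_le_mul_of_nonneg_left hsum_ub G.γ_pos.le
    linarith

end ConcreteAux

namespace OSPOSG

variable {S A1 A2 O : Type*} [Fintype S] [Fintype A1] [Fintype A2] [Fintype O]
  [Nonempty S] [Nonempty A1] [Nonempty A2] [Nonempty O]

/-- The stage game has a value: `sup_{π1} inf_{π2} u^{V,b} = inf_{π2} sup_{π1} u^{V,b}`, and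
the outer supremum resp. infimum are attained. -/
theorem stage_game_minimax (G : OSPOSG S A1 A2 O)
    (Γ : Set (S → ℝ)) (hne : Γ.Nonempty) (hΓconv : Convex ℝ Γ)
    (hbdd : ∀ b ∈ stdSimplex ℝ S, BddAbove ((fun α => lineval α b) '' Γ))
    (V : (S → ℝ) → ℝ)
    (hV : ∀ b ∈ stdSimplex ℝ S, V b = sSup ((fun α => lineval α b) '' Γ))
    (b : S → ℝ) (hb : b ∈ stdSimplex ℝ S) :
    ((⨆ π1 : stdSimplex ℝ A1, ⨅ π2 : Pi2 S A2, G.stageU V b π1.1 π2.1) =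
      ⨅ π2 : Pi2 S A2, ⨆ π1 : stdSimplex ℝ A1, G.stageU V b π1.1 π2.1) ∧
    (∃ π1s : stdSimplex ℝ A1,
      (⨅ π2 : Pi2 S A2, G.stageU V b π1s.1 π2.1) =
        ⨆ π1 : stdSimplex ℝ A1, ⨅ π2 : Pi2 S A2, G.stageU V b π1.1 π2.1) ∧
    (∃ π2s : Pi2 S A2,
      (⨆ π1 : stdSimplex ℝ A1, G.stageU V b π1.1 π2s.1) =
        ⨅ π2 : Pi2 S A2, ⨆ π1 : stdSimplex ℝ A1, G.stageU V b π1.1 π2.1) := by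

  classical
  obtain ⟨α0, hα0⟩ := hne
  set m : ℝ := Finset.univ.inf' Finset.univ_nonempty α0 with hm
  set M : ℝ := Mv (S := S) V with hM
  have hVlb : ∀ b' ∈ stdSimplex ℝ S, m ≤ V b' := fun b' hb' => inf_le_V V Γ hbdd hV hα0 hb'
  have hVub : ∀ b' ∈ stdSimplex ℝ S, V b' ≤ M := fun b' hb' =>
    V_le_Mv V Γ ⟨α0, hα0⟩ hbdd hV hb'
  set LB : ℝ := G.rmin + G.γ * m with hLB
  set UB : ℝ := G.rmax + G.γ * M with hUB
  set g : A1 → (S → A2 → ℝ) → ℝ := fun a1 π2 => gg G V b a1 π2 with hg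
  have hgLB : ∀ a1 : A1, ∀ π2 ∈ OSPOSG.Pi2 S A2, LB ≤ g a1 π2 := fun a1 π2 hπ2 =>
    (gg_bounds G V b hb hπ2 a1 m M hVlb hVub).1
  have hgUB : ∀ a1 : A1, ∀ π2 ∈ OSPOSG.Pi2 S A2, g a1 π2 ≤ UB := fun a1 π2 hπ2 =>
    (gg_bounds G V b hb hπ2 a1 m M hVlb hVub).2
  have hdecomp : ∀ (π1 : A1 → ℝ) (π2 : S → A2 → ℝ),
      G.stageU V b π1 π2 = ∑ a1, π1 a1 * g a1 π2 := fun π1 π2 => stageU_decomp G V b π1 π2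
  haveI hX : Nonempty (stdSimplex ℝ A1) := ⟨⟨vtx (Classical.arbitrary A1), vtx_mem _⟩⟩
  haveI hY : Nonempty (OSPOSG.Pi2 S A2) := Pi2_nonempty.to_subtype
  have huLB : ∀ (π1 : stdSimplex ℝ A1) (π2 : OSPOSG.Pi2 S A2),
      LB ≤ G.stageU V b π1.1 π2.1 := by
    intro π1 π2
    rw [hdecomp]
    calc LB = ∑ a1, π1.1 a1 * LB := by rw [← Finset.sum_mul, π1.2.2, one_mul]
      _ ≤ ∑ a1, π1.1 a1 * g a1 π2.1 := Finset.sum_le_sum fun a1 _ =>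
          mul_le_mul_of_nonneg_left (hgLB a1 π2.1 π2.2) (π1.2.1 a1)
  have huUB : ∀ (π1 : stdSimplex ℝ A1) (π2 : OSPOSG.Pi2 S A2),
      G.stageU V b π1.1 π2.1 ≤ UB := by
    intro π1 π2
    rw [hdecomp]
    calc ∑ a1, π1.1 a1 * g a1 π2.1 ≤ ∑ a1, π1.1 a1 * UB := Finset.sum_le_sum fun a1 _ =>
          mul_le_mul_of_nonneg_left (hgUB a1 π2.1 π2.2) (π1.2.1 a1)
      _ = UB := by rw [← Finset.sum_mul, π1.2.2, one_mul]
  set I : (stdSimplex ℝ A1) → ℝ :=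
    fun π1 => ⨅ π2 : OSPOSG.Pi2 S A2, G.stageU V b π1.1 π2.1 with hIdef
  set Sf : (OSPOSG.Pi2 S A2) → ℝ :=
    fun π2 => ⨆ π1 : stdSimplex ℝ A1, G.stageU V b π1.1 π2.1 with hSfdef
  have hIbdd : ∀ π1 : stdSimplex ℝ A1,
      BddBelow (Set.range fun π2 : OSPOSG.Pi2 S A2 => G.stageU V b π1.1 π2.1) :=
    fun π1 => ⟨LB, by rintro x ⟨π2, rfl⟩; exact huLB π1 π2⟩
  have hSbdd : ∀ π2 : OSPOSG.Pi2 S A2,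
      BddAbove (Set.range fun π1 : stdSimplex ℝ A1 => G.stageU V b π1.1 π2.1) :=
    fun π2 => ⟨UB, by rintro x ⟨π1, rfl⟩; exact huUB π1 π2⟩
  have hSfLB : ∀ π2 : OSPOSG.Pi2 S A2, LB ≤ Sf π2 := fun π2 =>
    (huLB (Classical.arbitrary _) π2).trans (le_ciSup (hSbdd π2) _)
  have hIUB : ∀ π1 : stdSimplex ℝ A1, I π1 ≤ UB := fun π1 =>
    (ciInf_le (hIbdd π1) (Classical.arbitrary _)).trans (huUB π1 _)
  set v : ℝ := ⨅ π2 : OSPOSG.Pi2 S A2, Sf π2 with hvdef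
  have hbddg : ∀ π2 : S → A2 → ℝ, BddAbove (Set.range fun a1 => g a1 π2) :=
    fun π2 => Set.Finite.bddAbove (Set.finite_range _)
  have hSf_eq : ∀ π2 : OSPOSG.Pi2 S A2, Sf π2 = ⨆ a1, g a1 π2.1 := by
    intro π2
    apply le_antisymm
    · refine ciSup_le fun π1 => ?_
      rw [hdecomp]
      calc ∑ a1, π1.1 a1 * g a1 π2.1 ≤ ∑ a1, π1.1 a1 * (⨆ a1', g a1' π2.1) :=
            Finset.sum_le_sum fun a1 _ =>
              mul_le_mul_of_nonneg_left (le_ciSup (hbddg π2.1) a1) (π1.2.1 a1)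
        _ = ⨆ a1', g a1' π2.1 := by rw [← Finset.sum_mul, π1.2.2, one_mul]
    · refine ciSup_le fun a1 => ?_
      have hvtx : G.stageU V b (vtx a1) π2.1 = g a1 π2.1 := by
        rw [hdecomp]
        unfold vtx
        simp only [ite_mul, one_mul, zero_mul]
        rw [Finset.sum_ite_eq']
        simp
      calc g a1 π2.1 = G.stageU V b (vtx a1) π2.1 := hvtx.symm
        _ ≤ Sf π2 := le_ciSup (hSbdd π2) ⟨vtx a1, vtx_mem a1⟩
  have hSfrangebdd : BddBelow (Set.range Sf) := ⟨LB, by rintro x ⟨π2, rfl⟩; exact hSfLB π2⟩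
  have hvSf : ∀ π2 : OSPOSG.Pi2 S A2, v ≤ Sf π2 := fun π2 => ciInf_le hSfrangebdd π2
  have hv_prop : ∀ y ∈ OSPOSG.Pi2 S A2, ∃ a1, v ≤ g a1 y := by
    intro y hy
    have h1 : v ≤ ⨆ a1, g a1 y := by
      rw [← hSf_eq ⟨y, hy⟩]
      exact hvSf ⟨y, hy⟩
    obtain ⟨a1, ha1⟩ := Finite.exists_max fun a1 => g a1 y
    exact ⟨a1, h1.trans (ciSup_le ha1)⟩
  obtain ⟨p, hp, hpv⟩ := core_sep Pi2_convex Pi2_nonempty g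
    (fun a1 y hy y' hy' c d hc hd hcd =>
      gg_convex_ineq G V b Γ ⟨α0, hα0⟩ hbdd hV hb a1 y hy y' hy' c d hc hd hcd) v hv_prop
  have hIp : v ≤ I ⟨p, hp⟩ := le_ciInf fun π2 => by
    rw [hdecomp]
    exact hpv π2.1 π2.2
  have hlsc : LowerSemicontinuousOn (fun y => ⨆ a1, g a1 y) (OSPOSG.Pi2 S A2) :=
    lowerSemicontinuousOn_ciSup (fun x _ => hbddg x)
      (fun a1 => gg_lsc G V b Γ ⟨α0, hα0⟩ hbdd hV hb a1)
  have hbbelow : BddBelow ((fun y => ⨆ a1, g a1 y) '' OSPOSG.Pi2 S A2) := by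
    refine ⟨LB, ?_⟩
    rintro x ⟨y, hy, rfl⟩
    exact (hgLB (Classical.arbitrary A1) y hy).trans (le_ciSup (hbddg y) _)
  obtain ⟨x2, hx2mem, hx2min⟩ := exists_min_lsc Pi2_compact Pi2_nonempty hlsc hbbelow
  have hSfx2 : ∀ π2 : OSPOSG.Pi2 S A2, Sf ⟨x2, hx2mem⟩ ≤ Sf π2 := by
    intro π2
    rw [hSf_eq, hSf_eq]
    exact hx2min π2.1 π2.2
  have hveq : Sf ⟨x2, hx2mem⟩ = v := le_antisymm (le_ciInf hSfx2) (hvSf _)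
  have hsupI_le : (⨆ π1 : stdSimplex ℝ A1, I π1) ≤ v :=
    ciSup_le fun π1 => le_ciInf fun π2 =>
      (ciInf_le (hIbdd π1) π2).trans (le_ciSup (hSbdd π2) π1)
  have hIrangebdd : BddAbove (Set.range I) := ⟨UB, by rintro x ⟨π1, rfl⟩; exact hIUB π1⟩
  have hIp_le : I ⟨p, hp⟩ ≤ ⨆ π1 : stdSimplex ℝ A1, I π1 := le_ciSup hIrangebdd ⟨p, hp⟩
  have hmain : (⨆ π1 : stdSimplex ℝ A1, I π1) = v :=
    le_antisymm hsupI_le (hIp.trans hIp_le)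
  exact ⟨hmain, ⟨⟨p, hp⟩, le_antisymm hIp_le (hmain.le.trans hIp)⟩,
    ⟨⟨x2, hx2mem⟩, hveq⟩⟩

end OSPOSG
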